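/- Let H be a group and C a subgroup of the center of H such that A := H/C is abelian, with quotient map π : H → A. Let H×_A H := {(h₁,h₂) ∈ H × H : π(h₁) = π(h₂)}, let K := {(c,c⁻¹) : c ∈ C} (a central subgroup of H×_A H), and let H⁽²⁾ := (H×_A H)/K be the Baer square of H, with projection p : H⁽²⁾ → A, (h₁,h₂)K ↦ π(h₁), and with C embedded in H⁽²⁾ via ι(c) := (c,1)K. Let {·,·} : A × A → C be the commutator pairing: {π(h₁),π(h₂)} := ⁅h₁,h₂⁆ = h₁h₂h₁⁻¹h₂⁻¹ ∈ C, which is independent of the choice of lifts h₁,h₂. Then the map σ ↦ s_σ, where s_σ(π(h)) := ((h·σ(h))⁻¹·h, h)·K ∈ H⁽²⁾ (well defined, using h·σ(h) ∈ C), is a bijection from the set of symmetric structures on H onto the set of set-theoretic sections s : A → H⁽²⁾ of p satisfying s(a)·s(b) = s(a·b)·ι({a,b}) for all a,b ∈ A. -/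

import Mathlib

section BaerSquare

open scoped commutatorElement

variable {H : Type*} [Group H] (C : Subgroup H) [C.Normal]

/-- A symmetric structure on the central extension `H` of `A = H/C` by `C`. -/
def IsSymmStruct (σ : H ≃* H) : Prop :=
  (∀ h : H, σ (σ h) = h) ∧ (∀ c ∈ C, σ c = c) ∧
    ∀ h : H, (QuotientGroup.mk (σ h) : H ⧸ C) = (QuotientGroup.mk h)⁻¹

/-- The fiber product `H ×_A H = {(h₁,h₂) : π h₁ = π h₂}`, as a subgroup of `H × H`:
the preimage of the diagonal under `π × π`. -/
def fiberProd : Subgroup (H × H) :=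
  Subgroup.comap ((QuotientGroup.mk' C).prodMap (QuotientGroup.mk' C))
    ((MonoidHom.id (H ⧸ C)).prod (MonoidHom.id (H ⧸ C))).range

variable (hC : C ≤ Subgroup.center H)

/-- The central subgroup `K = {(c,c⁻¹) : c ∈ C}` of the fiber product `H ×_A H`. -/
def antiDiag : Subgroup (fiberProd C) where
  carrier := {x | (x : H × H).1 ∈ C ∧ (x : H × H).2 = (x : H × H).1⁻¹}
  one_mem' := ⟨C.one_mem, by simp⟩
  mul_mem' := by
    rintro a b ⟨ha1, ha2⟩ ⟨hb1, hb2⟩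
    refine ⟨C.mul_mem ha1 hb1, ?_⟩
    have hcomm := Subgroup.mem_center_iff.mp (hC (C.inv_mem ha1))
    show ((a : H × H) * (b : H × H)).2 = ((a : H × H) * (b : H × H)).1⁻¹
    rw [Prod.snd_mul, Prod.fst_mul, ha2, hb2, mul_inv_rev, hcomm]
  inv_mem' := by
    rintro a ⟨ha1, ha2⟩
    refine ⟨C.inv_mem ha1, ?_⟩
    show ((a : H × H)⁻¹).2 = ((a : H × H)⁻¹).1⁻¹
    rw [Prod.snd_inv, Prod.fst_inv, ha2]

instance antiDiag_normal : (antiDiag C hC).Normal := by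
  constructor
  rintro n ⟨hn1, hn2⟩ g
  have hc1 := Subgroup.mem_center_iff.mp (hC hn1)
  have hc2 := Subgroup.mem_center_iff.mp (hC (C.inv_mem hn1))
  have e1 : ((g * n * g⁻¹ : fiberProd C) : H × H).1 = (n : H × H).1 := by
    show (g : H × H).1 * (n : H × H).1 * ((g : H × H).1)⁻¹ = (n : H × H).1
    rw [hc1, mul_assoc, mul_inv_cancel, mul_one]
  have e2 : ((g * n * g⁻¹ : fiberProd C) : H × H).2 = (n : H × H).2 := by
    show (g : H × H).2 * (n : H × H).2 * ((g : H × H).2)⁻¹ = (n : H × H).2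
    rw [hn2, hc2, mul_assoc, mul_inv_cancel, mul_one]
  exact ⟨e1 ▸ hn1, by rw [e1, e2, hn2]⟩

/-- The embedding `ι : C → H⁽²⁾`, `c ↦ (c,1)·K`, of `C` into the Baer square
`H⁽²⁾ = (H ×_A H)/K`. -/
def baerIota (c : C) : fiberProd C ⧸ antiDiag C hC :=
  QuotientGroup.mk
    ⟨((c : H), (1 : H)), by
      refine Subgroup.mem_comap.mpr (MonoidHom.mem_range.mpr ⟨1, Prod.ext ?_ ?_⟩)
      · simpa using ((QuotientGroup.eq_one_iff (c : H)).mpr c.2).symm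
      · simp⟩

/-- The projection `p : H⁽²⁾ → A`, `(h₁,h₂)·K ↦ π h₁`. -/
def baerProj : (fiberProd C ⧸ antiDiag C hC) →* H ⧸ C :=
  QuotientGroup.lift (antiDiag C hC)
    ((QuotientGroup.mk' C).comp ((MonoidHom.fst H H).comp (fiberProd C).subtype))
    (by
      rintro x ⟨hx1, _⟩
      simpa using (QuotientGroup.eq_one_iff ((x : H × H).1)).mpr hx1)

/-- A set-theoretic section `s : A → H⁽²⁾` of `p` satisfying the cocycle condition
`s(a)·s(b) = s(a·b)·ι({a,b})`, where `{·,·}` is the commutator pairing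
`{π h₁, π h₂} = ⁅h₁,h₂⁆ ∈ C`. -/
def IsBaerSection (hcomm : ∀ h₁ h₂ : H, ⁅h₁, h₂⁆ ∈ C)
    (s : H ⧸ C → fiberProd C ⧸ antiDiag C hC) : Prop :=
  (∀ a : H ⧸ C, baerProj C hC (s a) = a) ∧
    ∀ h₁ h₂ : H,
      s (QuotientGroup.mk h₁) * s (QuotientGroup.mk h₂) =
        s (QuotientGroup.mk (h₁ * h₂)) * baerIota C hC ⟨⁅h₁, h₂⁆, hcomm h₁ h₂⟩


/-! ### Auxiliary lemmas -/

section Aux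

lemma aux_cc (hZ : C ≤ Subgroup.center H) {c : H} (hc : c ∈ C) (x : H) :
    c * x = x * c :=
  (Subgroup.mem_center_iff.mp (hZ hc) x).symm

lemma aux_swap {G : Type*} [Group G] (a b : G) : a * b = ⁅a, b⁆ * (b * a) := by
  rw [commutatorElement_def]; group

lemma aux_comm_one {G : Type*} [Group G] (b : G) : ⁅(1 : G), b⁆ = 1 := by
  rw [commutatorElement_def]; group

lemma aux_comm_self_inv {G : Type*} [Group G] (a : G) : ⁅a, a⁻¹⁆ = 1 := by
  rw [commutatorElement_def]; group

lemma aux_cmul_left (hZ : C ≤ Subgroup.center H)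
    (hcomm : ∀ h₁ h₂ : H, ⁅h₁, h₂⁆ ∈ C) (a b c : H) :
    ⁅a * b, c⁆ = ⁅b, c⁆ * ⁅a, c⁆ := by
  calc ⁅a * b, c⁆ = a * (b * c * b⁻¹ * c⁻¹) * c * a⁻¹ * c⁻¹ := by
        rw [commutatorElement_def]; group
    _ = a * ⁅b, c⁆ * c * a⁻¹ * c⁻¹ := by rw [← commutatorElement_def]
    _ = ⁅b, c⁆ * a * c * a⁻¹ * c⁻¹ := by rw [(aux_cc C hZ (hcomm b c) a).symm]
    _ = ⁅b, c⁆ * ⁅a, c⁆ := by rw [commutatorElement_def a c]; group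

lemma aux_cinv_left (hZ : C ≤ Subgroup.center H)
    (hcomm : ∀ h₁ h₂ : H, ⁅h₁, h₂⁆ ∈ C) (a b : H) :
    ⁅a⁻¹, b⁆ = ⁅a, b⁆⁻¹ := by
  have h := aux_cmul_left C hZ hcomm a a⁻¹ b
  rw [mul_inv_cancel, aux_comm_one] at h
  exact (eq_inv_of_mul_eq_one_left h.symm)

lemma aux_cmul_right (hZ : C ≤ Subgroup.center H)
    (hcomm : ∀ h₁ h₂ : H, ⁅h₁, h₂⁆ ∈ C) (a b c : H) :
    ⁅a, b * c⁆ = ⁅a, b⁆ * ⁅a, c⁆ := by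
  rw [← commutatorElement_inv (b*c) a, aux_cmul_left C hZ hcomm b c a, mul_inv_rev,
    commutatorElement_inv b a, commutatorElement_inv c a]

lemma aux_cinv_right (hZ : C ≤ Subgroup.center H)
    (hcomm : ∀ h₁ h₂ : H, ⁅h₁, h₂⁆ ∈ C) (a b : H) :
    ⁅a, b⁻¹⁆ = ⁅a, b⁆⁻¹ := by
  rw [← commutatorElement_inv b⁻¹ a, aux_cinv_left C hZ hcomm b a,
    commutatorElement_inv a b, inv_inv]

lemma aux_ccongr_aux (hZ : C ≤ Subgroup.center H) (a b : H) {c d : H}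
    (hc : c ∈ C) (hd : d ∈ C) : ⁅a * c, b * d⁆ = ⁅a, b⁆ := by
  calc ⁅a * c, b * d⁆
      = a * (c * (b * d)) * (c⁻¹ * (a⁻¹ * (d⁻¹ * b⁻¹))) := by
        rw [commutatorElement_def]; group
    _ = a * ((b * d) * c) * (c⁻¹ * (a⁻¹ * (d⁻¹ * b⁻¹))) := by
        rw [aux_cc C hZ hc (b * d)]
    _ = a * b * (d * a⁻¹) * (d⁻¹ * b⁻¹) := by group
    _ = a * b * (a⁻¹ * d) * (d⁻¹ * b⁻¹) := by rw [aux_cc C hZ hd a⁻¹]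
    _ = ⁅a, b⁆ := by rw [commutatorElement_def]; group

lemma aux_ccongr (hZ : C ≤ Subgroup.center H) {a a' b b' : H}
    (ha : (QuotientGroup.mk a : H ⧸ C) = QuotientGroup.mk a')
    (hb : (QuotientGroup.mk b : H ⧸ C) = QuotientGroup.mk b') :
    ⁅a, b⁆ = ⁅a', b'⁆ := by
  have hca : a⁻¹ * a' ∈ C := QuotientGroup.eq.mp ha
  have hcb : b⁻¹ * b' ∈ C := QuotientGroup.eq.mp hb
  have ea : a' = a * (a⁻¹ * a') := by group
  have eb : b' = b * (b⁻¹ * b') := by group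
  conv_rhs => rw [ea, eb]
  exact (aux_ccongr_aux C hZ a b hca hcb).symm

lemma mem_fiberProd {x : H × H} :
    x ∈ fiberProd C ↔ (QuotientGroup.mk x.1 : H ⧸ C) = QuotientGroup.mk x.2 := by
  constructor
  · intro hx
    obtain ⟨y, hy⟩ := MonoidHom.mem_range.mp (Subgroup.mem_comap.mp hx)
    have h1 : y = QuotientGroup.mk x.1 := congrArg Prod.fst hy
    have h2 : y = QuotientGroup.mk x.2 := congrArg Prod.snd hy
    exact h1.symm.trans h2
  · intro h
    refine Subgroup.mem_comap.mpr (MonoidHom.mem_range.mpr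
      ⟨QuotientGroup.mk x.1, Prod.ext ?_ ?_⟩)
    · simp
    · simpa using h

lemma aux_baer_eq (hZ : C ≤ Subgroup.center H) (x y : fiberProd C)
    (h1 : ((x : H × H).1)⁻¹ * (y : H × H).1 ∈ C)
    (h2 : ((x : H × H).2)⁻¹ * (y : H × H).2 = (((x : H × H).1)⁻¹ * (y : H × H).1)⁻¹) :
    (QuotientGroup.mk x : fiberProd C ⧸ antiDiag C hZ) = QuotientGroup.mk y :=
  QuotientGroup.eq.mpr ⟨h1, h2⟩

/-- The `K`-invariant product map `H⁽²⁾ → H`, `(h₁,h₂)K ↦ h₁h₂`. -/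
def prodOf : (fiberProd C ⧸ antiDiag C hC) → H :=
  Quotient.lift (fun x : fiberProd C => (x : H × H).1 * (x : H × H).2)
    (by
      intro x y hxy
      obtain ⟨h1, h2⟩ := QuotientGroup.leftRel_apply.mp hxy
      have hy : (y : H × H) = (x : H × H) * ((x⁻¹ * y : fiberProd C) : H × H) :=
        (mul_inv_cancel_left _ _).symm
      show (x : H × H).1 * (x : H × H).2 = (y : H × H).1 * (y : H × H).2
      rw [hy, Prod.fst_mul, Prod.snd_mul, h2]
      rw [mul_assoc, ← mul_assoc (((x⁻¹ * y : fiberProd C) : H × H).1),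
        aux_cc C hC h1 ((x : H × H).2), mul_assoc, mul_inv_cancel, mul_one])

lemma aux_prodOf_mk (x : fiberProd C) :
    prodOf C hC (QuotientGroup.mk x) = (x : H × H).1 * (x : H × H).2 := rfl

lemma aux_baerProj_mk (x : fiberProd C) :
    baerProj C hC (QuotientGroup.mk x) = QuotientGroup.mk (x : H × H).1 := rfl

lemma aux_iota_mem (c : C) : (((c : H), (1 : H)) : H × H) ∈ fiberProd C := by
  refine (mem_fiberProd C).mpr ?_
  have : (QuotientGroup.mk (c : H) : H ⧸ C) = 1 := (QuotientGroup.eq_one_iff _).mpr c.2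
  rw [this]
  exact (QuotientGroup.mk_one C).symm

lemma aux_iota_eq (c : C) :
    baerIota C hC c = QuotientGroup.mk ⟨((c : H), (1 : H)), aux_iota_mem C c⟩ := rfl

/-! ### The forward map: symmetric structures to sections -/

lemma aux_pair_fst (σ : H ≃* H)
    (hσ3 : ∀ h : H, (QuotientGroup.mk (σ h) : H ⧸ C) = (QuotientGroup.mk h)⁻¹) (h : H) :
    (QuotientGroup.mk ((h * σ h)⁻¹ * h) : H ⧸ C) = QuotientGroup.mk h := by
  rw [QuotientGroup.mk_mul, QuotientGroup.mk_inv, QuotientGroup.mk_mul, hσ3 h]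
  group

lemma aux_pair_mem (σ : H ≃* H)
    (hσ3 : ∀ h : H, (QuotientGroup.mk (σ h) : H ⧸ C) = (QuotientGroup.mk h)⁻¹) (h : H) :
    (((h * σ h)⁻¹ * h, h) : H × H) ∈ fiberProd C :=
  (mem_fiberProd C).mpr (aux_pair_fst C σ hσ3 h)

lemma aux_k_mem (σ : H ≃* H)
    (hσ3 : ∀ h : H, (QuotientGroup.mk (σ h) : H ⧸ C) = (QuotientGroup.mk h)⁻¹) (h : H) :
    h * σ h ∈ C := by
  refine (QuotientGroup.eq_one_iff _).mp ?_
  rw [QuotientGroup.mk_mul, hσ3 h]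
  group

lemma aux_fwd_wd (σ : H ≃* H) (hσ : IsSymmStruct C σ) (h h' : H)
    (hrel : h⁻¹ * h' ∈ C) :
    (QuotientGroup.mk ⟨((h * σ h)⁻¹ * h, h), aux_pair_mem C σ hσ.2.2 h⟩ :
        fiberProd C ⧸ antiDiag C hC) =
      QuotientGroup.mk ⟨((h' * σ h')⁻¹ * h', h'), aux_pair_mem C σ hσ.2.2 h'⟩ := by
  obtain ⟨c, hcmem, rfl⟩ : ∃ c ∈ C, h' = h * c := ⟨h⁻¹ * h', hrel, by group⟩
  have hσc : σ (h * c) = σ h * c := by rw [map_mul, hσ.2.1 c hcmem]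
  have val1 : ((h * σ h)⁻¹ * h)⁻¹ * ((h * c * σ (h * c))⁻¹ * (h * c)) = c⁻¹ := by
    rw [hσc]
    calc ((h * σ h)⁻¹ * h)⁻¹ * ((h * c * (σ h * c))⁻¹ * (h * c))
        = σ h * (c⁻¹ * (σ h)⁻¹) := by group
      _ = σ h * ((σ h)⁻¹ * c⁻¹) := by rw [aux_cc C hC (C.inv_mem hcmem) (σ h)⁻¹]
      _ = c⁻¹ := by group
  refine aux_baer_eq C hC _ _ ?_ ?_
  · show ((h * σ h)⁻¹ * h)⁻¹ * ((h * c * σ (h * c))⁻¹ * (h * c)) ∈ C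
    rw [val1]; exact C.inv_mem hcmem
  · show h⁻¹ * (h * c) = (((h * σ h)⁻¹ * h)⁻¹ * ((h * c * σ (h * c))⁻¹ * (h * c)))⁻¹
    rw [val1]; group

/-- The forward map `σ ↦ s_σ`. -/
def fwdS (σ : H ≃* H) (hσ : IsSymmStruct C σ) : H ⧸ C → fiberProd C ⧸ antiDiag C hC :=
  Quotient.lift
    (fun h : H => (QuotientGroup.mk ⟨((h * σ h)⁻¹ * h, h), aux_pair_mem C σ hσ.2.2 h⟩ :
      fiberProd C ⧸ antiDiag C hC))
    (fun a b hab => aux_fwd_wd C hC σ hσ a b (QuotientGroup.leftRel_apply.mp hab))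

lemma fwdS_mk (σ : H ≃* H) (hσ : IsSymmStruct C σ) (h : H) :
    fwdS C hC σ hσ (QuotientGroup.mk h) =
      QuotientGroup.mk ⟨((h * σ h)⁻¹ * h, h), aux_pair_mem C σ hσ.2.2 h⟩ := rfl

lemma fwdS_isSection (hcomm : ∀ h₁ h₂ : H, ⁅h₁, h₂⁆ ∈ C) (σ : H ≃* H)
    (hσ : IsSymmStruct C σ) : IsBaerSection C hC hcomm (fwdS C hC σ hσ) := by
  constructor
  · intro a
    obtain ⟨h, rfl⟩ := QuotientGroup.mk_surjective a
    rw [fwdS_mk, aux_baerProj_mk]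
    exact aux_pair_fst C σ hσ.2.2 h
  · intro h₁ h₂
    rw [fwdS_mk, fwdS_mk, fwdS_mk, aux_iota_eq, ← QuotientGroup.mk_mul,
      ← QuotientGroup.mk_mul]
    refine congrArg _ (Subtype.ext (Prod.ext ?_ ?_))
    · show ((h₁ * σ h₁)⁻¹ * h₁) * ((h₂ * σ h₂)⁻¹ * h₂) =
        ((h₁ * h₂ * σ (h₁ * h₂))⁻¹ * (h₁ * h₂)) * ⁅h₁, h₂⁆
      rw [map_mul]
      obtain ⟨k₁, hk₁mem, hk₁⟩ : ∃ k ∈ C, h₁ * σ h₁ = k :=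
        ⟨_, aux_k_mem C σ hσ.2.2 h₁, rfl⟩
      obtain ⟨k₂, hk₂mem, hk₂⟩ : ∃ k ∈ C, h₂ * σ h₂ = k :=
        ⟨_, aux_k_mem C σ hσ.2.2 h₂, rfl⟩
      have e₁ : σ h₁ = h₁⁻¹ * k₁ := by rw [← hk₁]; group
      have e₂ : σ h₂ = h₂⁻¹ * k₂ := by rw [← hk₂]; group
      rw [e₁, e₂]
      have sw1 : ∀ x : H, k₁⁻¹ * x = x * k₁⁻¹ := fun x => aux_cc C hC (C.inv_mem hk₁mem) x
      have sw2 : ∀ x : H, k₂⁻¹ * x = x * k₂⁻¹ := fun x => aux_cc C hC (C.inv_mem hk₂mem) x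
      have sww : ∀ x : H, ⁅h₁, h₂⁆ * x = x * ⁅h₁, h₂⁆ := fun x => aux_cc C hC (hcomm h₁ h₂) x
      have L : ((h₁ * (h₁⁻¹ * k₁))⁻¹ * h₁) * ((h₂ * (h₂⁻¹ * k₂))⁻¹ * h₂) =
          k₂⁻¹ * k₁⁻¹ * (h₁ * h₂) := by
        calc ((h₁ * (h₁⁻¹ * k₁))⁻¹ * h₁) * ((h₂ * (h₂⁻¹ * k₂))⁻¹ * h₂)
            = k₁⁻¹ * (h₁ * k₂⁻¹) * h₂ := by group
          _ = k₁⁻¹ * (k₂⁻¹ * h₁) * h₂ := by rw [← sw2 h₁]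
          _ = k₁⁻¹ * k₂⁻¹ * (h₁ * h₂) := by group
          _ = k₂⁻¹ * k₁⁻¹ * (h₁ * h₂) := by rw [sw1 k₂⁻¹]
      have R : ((h₁ * h₂ * ((h₁⁻¹ * k₁) * (h₂⁻¹ * k₂)))⁻¹ * (h₁ * h₂)) * ⁅h₁, h₂⁆ =
          k₂⁻¹ * k₁⁻¹ * (h₁ * h₂) := by
        calc ((h₁ * h₂ * ((h₁⁻¹ * k₁) * (h₂⁻¹ * k₂)))⁻¹ * (h₁ * h₂)) * ⁅h₁, h₂⁆
            = k₂⁻¹ * (h₂ * k₁⁻¹) * (h₁ * ⁅h₁, h₂⁆) := by group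
          _ = k₂⁻¹ * (k₁⁻¹ * h₂) * (h₁ * ⁅h₁, h₂⁆) := by rw [← sw1 h₂]
          _ = k₂⁻¹ * k₁⁻¹ * ((h₂ * h₁) * ⁅h₁, h₂⁆) := by group
          _ = k₂⁻¹ * k₁⁻¹ * (⁅h₁, h₂⁆ * (h₂ * h₁)) := by rw [← sww (h₂ * h₁)]
          _ = k₂⁻¹ * k₁⁻¹ * (h₁ * h₂ * h₁⁻¹ * h₂⁻¹ * (h₂ * h₁)) := by
              rw [commutatorElement_def]
          _ = k₂⁻¹ * k₁⁻¹ * (h₁ * h₂) := by group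
      exact L.trans R.symm
    · show h₁ * h₂ = (h₁ * h₂) * 1
      rw [mul_one]

/-! ### The backward map: sections to symmetric structures -/

lemma aux_rep (hcomm : ∀ h₁ h₂ : H, ⁅h₁, h₂⁆ ∈ C)
    (s : H ⧸ C → fiberProd C ⧸ antiDiag C hC) (hs : IsBaerSection C hC hcomm s)
    (a : H ⧸ C) :
    ∃ x : fiberProd C, QuotientGroup.mk x = s a ∧
      (QuotientGroup.mk (x : H × H).1 : H ⧸ C) = a ∧
      (QuotientGroup.mk (x : H × H).2 : H ⧸ C) = a := by
  obtain ⟨x, hx⟩ := QuotientGroup.mk_surjective (s a)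
  have h1 : (QuotientGroup.mk (x : H × H).1 : H ⧸ C) = a := by
    have := hs.1 a
    rw [← hx, aux_baerProj_mk] at this
    exact this
  exact ⟨x, hx, h1, ((mem_fiberProd C).mp x.2).symm.trans h1⟩

lemma aux_s_one (hcomm : ∀ h₁ h₂ : H, ⁅h₁, h₂⁆ ∈ C)
    (s : H ⧸ C → fiberProd C ⧸ antiDiag C hC) (hs : IsBaerSection C hC hcomm s) :
    s (1 : H ⧸ C) = 1 := by
  have E := hs.2 1 1
  have hone : (⟨⁅(1 : H), 1⁆, hcomm 1 1⟩ : C) = 1 := Subtype.ext (aux_comm_one 1)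
  rw [one_mul, QuotientGroup.mk_one C, hone, aux_iota_eq] at E
  have h1 : (⟨((((1 : C)) : H), (1 : H)), aux_iota_mem C 1⟩ : fiberProd C) = 1 :=
    Subtype.ext (Prod.ext (by simp) rfl)
  rw [h1, QuotientGroup.mk_one (antiDiag C hC), mul_one] at E
  exact mul_left_cancel (E.trans (mul_one _).symm)

lemma aux_Q_one (hcomm : ∀ h₁ h₂ : H, ⁅h₁, h₂⁆ ∈ C)
    (s : H ⧸ C → fiberProd C ⧸ antiDiag C hC) (hs : IsBaerSection C hC hcomm s) :
    prodOf C hC (s (1 : H ⧸ C)) = 1 := by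
  rw [aux_s_one C hC hcomm s hs, ← QuotientGroup.mk_one (antiDiag C hC), aux_prodOf_mk]
  simp

lemma aux_Qmk (hcomm : ∀ h₁ h₂ : H, ⁅h₁, h₂⁆ ∈ C)
    (s : H ⧸ C → fiberProd C ⧸ antiDiag C hC) (hs : IsBaerSection C hC hcomm s)
    (h : H) :
    (QuotientGroup.mk (prodOf C hC (s (QuotientGroup.mk h))) : H ⧸ C) =
      QuotientGroup.mk h * QuotientGroup.mk h := by
  obtain ⟨x, hx, hx1, hx2⟩ := aux_rep C hC hcomm s hs (QuotientGroup.mk h)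
  rw [← hx, aux_prodOf_mk, QuotientGroup.mk_mul, hx1, hx2]

lemma aux_Qmul (hcomm : ∀ h₁ h₂ : H, ⁅h₁, h₂⁆ ∈ C)
    (s : H ⧸ C → fiberProd C ⧸ antiDiag C hC) (hs : IsBaerSection C hC hcomm s)
    (h₁ h₂ : H) :
    prodOf C hC (s (QuotientGroup.mk h₁)) * prodOf C hC (s (QuotientGroup.mk h₂)) =
      ⁅h₁, h₂⁆ * prodOf C hC (s (QuotientGroup.mk (h₁ * h₂))) * ⁅h₁, h₂⁆ := by
  obtain ⟨x, hx, hx1, hx2⟩ := aux_rep C hC hcomm s hs (QuotientGroup.mk h₁)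
  obtain ⟨y, hy, hy1, hy2⟩ := aux_rep C hC hcomm s hs (QuotientGroup.mk h₂)
  obtain ⟨z, hz, hz1, hz2⟩ := aux_rep C hC hcomm s hs (QuotientGroup.mk (h₁ * h₂))
  have E := hs.2 h₁ h₂
  rw [← hx, ← hy, ← hz, aux_iota_eq, ← QuotientGroup.mk_mul, ← QuotientGroup.mk_mul] at E
  have E' : (x : H × H).1 * (y : H × H).1 * ((x : H × H).2 * (y : H × H).2) =
      (z : H × H).1 * ⁅h₁, h₂⁆ * ((z : H × H).2 * 1) := congrArg (prodOf C hC) E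
  have hcxy : ⁅(x : H × H).2, (y : H × H).1⁆ = ⁅h₁, h₂⁆ :=
    aux_ccongr C hC (hx2.trans hx1.symm ▸ hx2) hy1
  have sww : ∀ u : H, ⁅h₁, h₂⁆ * u = u * ⁅h₁, h₂⁆ := fun u => aux_cc C hC (hcomm h₁ h₂) u
  rw [← hx, ← hy, ← hz, aux_prodOf_mk, aux_prodOf_mk, aux_prodOf_mk]
  calc (x : H × H).1 * (x : H × H).2 * ((y : H × H).1 * (y : H × H).2)
      = (x : H × H).1 * ((x : H × H).2 * (y : H × H).1) * (y : H × H).2 := by group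
    _ = (x : H × H).1 * (⁅(x : H × H).2, (y : H × H).1⁆ * ((y : H × H).1 * (x : H × H).2)) *
          (y : H × H).2 := by rw [aux_swap ((x : H × H).2) ((y : H × H).1)]
    _ = (x : H × H).1 * (⁅h₁, h₂⁆ * ((y : H × H).1 * (x : H × H).2)) * (y : H × H).2 := by
        rw [hcxy]
    _ = (x : H × H).1 * ⁅h₁, h₂⁆ * ((y : H × H).1 * ((x : H × H).2 * (y : H × H).2)) := by
        group
    _ = ⁅h₁, h₂⁆ * (x : H × H).1 * ((y : H × H).1 * ((x : H × H).2 * (y : H × H).2)) := by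
        rw [← sww ((x : H × H).1)]
    _ = ⁅h₁, h₂⁆ * ((x : H × H).1 * (y : H × H).1 * ((x : H × H).2 * (y : H × H).2)) := by
        group
    _ = ⁅h₁, h₂⁆ * ((z : H × H).1 * ⁅h₁, h₂⁆ * ((z : H × H).2 * 1)) := by rw [E']
    _ = ⁅h₁, h₂⁆ * ((z : H × H).1 * (⁅h₁, h₂⁆ * ((z : H × H).2 * 1))) := by group
    _ = ⁅h₁, h₂⁆ * ((z : H × H).1 * (((z : H × H).2 * 1) * ⁅h₁, h₂⁆)) := by
        rw [sww ((z : H × H).2 * 1)]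
    _ = ⁅h₁, h₂⁆ * ((z : H × H).1 * (z : H × H).2) * ⁅h₁, h₂⁆ := by group

/-- The backward map on elements. -/
def bwdFun (hcomm : ∀ h₁ h₂ : H, ⁅h₁, h₂⁆ ∈ C)
    (s : H ⧸ C → fiberProd C ⧸ antiDiag C hC) : H → H :=
  fun h => h * (prodOf C hC (s (QuotientGroup.mk h)))⁻¹

lemma aux_bwd_mk (hcomm : ∀ h₁ h₂ : H, ⁅h₁, h₂⁆ ∈ C)
    (s : H ⧸ C → fiberProd C ⧸ antiDiag C hC) (hs : IsBaerSection C hC hcomm s)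
    (h : H) :
    (QuotientGroup.mk (bwdFun C hC hcomm s h) : H ⧸ C) = (QuotientGroup.mk h)⁻¹ := by
  show (QuotientGroup.mk (h * (prodOf C hC (s (QuotientGroup.mk h)))⁻¹) : H ⧸ C) = _
  rw [QuotientGroup.mk_mul, QuotientGroup.mk_inv, aux_Qmk C hC hcomm s hs h]
  group

lemma aux_Qinv (hcomm : ∀ h₁ h₂ : H, ⁅h₁, h₂⁆ ∈ C)
    (s : H ⧸ C → fiberProd C ⧸ antiDiag C hC) (hs : IsBaerSection C hC hcomm s)
    (h : H) :
    prodOf C hC (s (QuotientGroup.mk h⁻¹)) = (prodOf C hC (s (QuotientGroup.mk h)))⁻¹ := by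
  have E := aux_Qmul C hC hcomm s hs h h⁻¹
  rw [aux_comm_self_inv, one_mul, mul_one, mul_inv_cancel, QuotientGroup.mk_one C,
    aux_Q_one C hC hcomm s hs] at E
  exact eq_inv_of_mul_eq_one_right E

lemma aux_bwd_invol (hcomm : ∀ h₁ h₂ : H, ⁅h₁, h₂⁆ ∈ C)
    (s : H ⧸ C → fiberProd C ⧸ antiDiag C hC) (hs : IsBaerSection C hC hcomm s)
    (h : H) : bwdFun C hC hcomm s (bwdFun C hC hcomm s h) = h := by
  have e : (QuotientGroup.mk (bwdFun C hC hcomm s h) : H ⧸ C) = QuotientGroup.mk h⁻¹ :=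
    (aux_bwd_mk C hC hcomm s hs h).trans (QuotientGroup.mk_inv C h).symm
  show bwdFun C hC hcomm s h *
      (prodOf C hC (s (QuotientGroup.mk (bwdFun C hC hcomm s h))))⁻¹ = h
  rw [e, aux_Qinv C hC hcomm s hs h]
  show h * (prodOf C hC (s (QuotientGroup.mk h)))⁻¹ *
      ((prodOf C hC (s (QuotientGroup.mk h)))⁻¹)⁻¹ = h
  group

lemma aux_bwd_mul (hcomm : ∀ h₁ h₂ : H, ⁅h₁, h₂⁆ ∈ C)
    (s : H ⧸ C → fiberProd C ⧸ antiDiag C hC) (hs : IsBaerSection C hC hcomm s)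
    (h₁ h₂ : H) : bwdFun C hC hcomm s (h₁ * h₂) =
      bwdFun C hC hcomm s h₁ * bwdFun C hC hcomm s h₂ := by
  have hQ1mk : (QuotientGroup.mk (prodOf C hC (s (QuotientGroup.mk h₁))) : H ⧸ C) =
      QuotientGroup.mk (h₁ * h₁) :=
    (aux_Qmk C hC hcomm s hs h₁).trans (QuotientGroup.mk_mul C h₁ h₁).symm
  have hQ2mk : (QuotientGroup.mk (prodOf C hC (s (QuotientGroup.mk h₂))) : H ⧸ C) =
      QuotientGroup.mk (h₂ * h₂) :=
    (aux_Qmk C hC hcomm s hs h₂).trans (QuotientGroup.mk_mul C h₂ h₂).symm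
  set w := ⁅h₁, h₂⁆ with hw
  set Q₁ := prodOf C hC (s (QuotientGroup.mk h₁)) with hQ₁
  set Q₂ := prodOf C hC (s (QuotientGroup.mk h₂)) with hQ₂
  set Q₁₂ := prodOf C hC (s (QuotientGroup.mk (h₁ * h₂))) with hQ₁₂
  have hwC : w ∈ C := hcomm h₁ h₂
  have hw2C : w * w ∈ C := C.mul_mem hwC hwC
  have sww : ∀ x : H, w * x = x * w := fun x => aux_cc C hC hwC x
  have sw2 : ∀ x : H, (w * w) * x = x * (w * w) := fun x => aux_cc C hC hw2C x
  have sw2i : ∀ x : H, (w * w)⁻¹ * x = x * (w * w)⁻¹ :=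
    fun x => aux_cc C hC (C.inv_mem hw2C) x
  have c1 : ⁅Q₁, h₂⁆ = w * w := by
    rw [aux_ccongr C hC hQ1mk (rfl : (QuotientGroup.mk h₂ : H ⧸ C) = _),
      aux_cmul_left C hC hcomm h₁ h₁ h₂]
  have c2 : ⁅Q₁⁻¹, h₂⁆ = (w * w)⁻¹ := by
    rw [aux_cinv_left C hC hcomm Q₁ h₂, c1]
  have c3 : ⁅Q₁⁻¹, Q₂⁻¹⁆ = (w * w) * (w * w) := by
    rw [aux_cinv_left C hC hcomm Q₁ Q₂⁻¹, aux_cinv_right C hC hcomm Q₁ Q₂, inv_inv,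
      aux_ccongr C hC hQ1mk hQ2mk, aux_cmul_left C hC hcomm h₁ h₁ (h₂ * h₂),
      aux_cmul_right C hC hcomm h₁ h₂ h₂]
  have E1 : Q₁₂ = w⁻¹ * (Q₁ * Q₂) * w⁻¹ := by
    rw [aux_Qmul C hC hcomm s hs h₁ h₂, ← hw, ← hQ₁₂]
    group
  show h₁ * h₂ * Q₁₂⁻¹ = (h₁ * Q₁⁻¹) * (h₂ * Q₂⁻¹)
  have L : h₁ * h₂ * Q₁₂⁻¹ = h₁ * h₂ * ((Q₂⁻¹ * Q₁⁻¹) * (w * w)) := by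
    calc h₁ * h₂ * Q₁₂⁻¹ = h₁ * h₂ * (w⁻¹ * (Q₁ * Q₂) * w⁻¹)⁻¹ := by rw [E1]
      _ = h₁ * h₂ * (w * ((Q₂⁻¹ * Q₁⁻¹) * w)) := by group
      _ = h₁ * h₂ * (((Q₂⁻¹ * Q₁⁻¹) * w) * w) := by rw [sww ((Q₂⁻¹ * Q₁⁻¹) * w)]
      _ = h₁ * h₂ * ((Q₂⁻¹ * Q₁⁻¹) * (w * w)) := by simp only [mul_assoc]
  have R : (h₁ * Q₁⁻¹) * (h₂ * Q₂⁻¹) = h₁ * h₂ * ((Q₂⁻¹ * Q₁⁻¹) * (w * w)) := by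
    calc (h₁ * Q₁⁻¹) * (h₂ * Q₂⁻¹)
        = h₁ * (Q₁⁻¹ * h₂) * Q₂⁻¹ := by group
      _ = h₁ * (⁅Q₁⁻¹, h₂⁆ * (h₂ * Q₁⁻¹)) * Q₂⁻¹ := by rw [aux_swap Q₁⁻¹ h₂]
      _ = h₁ * ((w * w)⁻¹ * (h₂ * Q₁⁻¹)) * Q₂⁻¹ := by rw [c2]
      _ = h₁ * (w * w)⁻¹ * (h₂ * (Q₁⁻¹ * Q₂⁻¹)) := by group
      _ = (w * w)⁻¹ * h₁ * (h₂ * (Q₁⁻¹ * Q₂⁻¹)) := by rw [← sw2i h₁]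
      _ = (w * w)⁻¹ * h₁ * (h₂ * (⁅Q₁⁻¹, Q₂⁻¹⁆ * (Q₂⁻¹ * Q₁⁻¹))) := by
          rw [aux_swap Q₁⁻¹ Q₂⁻¹]
      _ = (w * w)⁻¹ * h₁ * (h₂ * (((w * w) * (w * w)) * (Q₂⁻¹ * Q₁⁻¹))) := by rw [c3]
      _ = (w * w)⁻¹ * (h₁ * h₂) * ((w * w) * ((w * w) * (Q₂⁻¹ * Q₁⁻¹))) := by group
      _ = (h₁ * h₂) * (w * w)⁻¹ * ((w * w) * ((w * w) * (Q₂⁻¹ * Q₁⁻¹))) := by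
          rw [sw2i (h₁ * h₂)]
      _ = h₁ * h₂ * ((w * w) * (Q₂⁻¹ * Q₁⁻¹)) := by
          rw [mul_assoc, inv_mul_cancel_left]
      _ = h₁ * h₂ * ((Q₂⁻¹ * Q₁⁻¹) * (w * w)) := by rw [sw2 (Q₂⁻¹ * Q₁⁻¹)]
  exact L.trans R.symm

lemma aux_bwd_fix (hcomm : ∀ h₁ h₂ : H, ⁅h₁, h₂⁆ ∈ C)
    (s : H ⧸ C → fiberProd C ⧸ antiDiag C hC) (hs : IsBaerSection C hC hcomm s)
    {c : H} (hc : c ∈ C) : bwdFun C hC hcomm s c = c := by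
  have e : (QuotientGroup.mk c : H ⧸ C) = 1 := (QuotientGroup.eq_one_iff c).mpr hc
  show c * (prodOf C hC (s (QuotientGroup.mk c)))⁻¹ = c
  rw [e, aux_Q_one C hC hcomm s hs]
  group

/-- The backward map, as a `MulEquiv`. -/
def bwdEquiv (hcomm : ∀ h₁ h₂ : H, ⁅h₁, h₂⁆ ∈ C)
    (s : H ⧸ C → fiberProd C ⧸ antiDiag C hC) (hs : IsBaerSection C hC hcomm s) :
    H ≃* H :=
  ⟨⟨bwdFun C hC hcomm s, bwdFun C hC hcomm s, aux_bwd_invol C hC hcomm s hs,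
    aux_bwd_invol C hC hcomm s hs⟩, aux_bwd_mul C hC hcomm s hs⟩

lemma bwdEquiv_isSymm (hcomm : ∀ h₁ h₂ : H, ⁅h₁, h₂⁆ ∈ C)
    (s : H ⧸ C → fiberProd C ⧸ antiDiag C hC) (hs : IsBaerSection C hC hcomm s) :
    IsSymmStruct C (bwdEquiv C hC hcomm s hs) :=
  ⟨aux_bwd_invol C hC hcomm s hs, fun _ hc => aux_bwd_fix C hC hcomm s hs hc,
    aux_bwd_mk C hC hcomm s hs⟩

end Aux

/-- Let `H` be a group, `C ≤ Z(H)` with `A := H/C` abelian (so all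
commutators `⁅h₁,h₂⁆` lie in `C`). The map `σ ↦ s_σ`, where
`s_σ(π h) := ((h·σ h)⁻¹·h, h)·K ∈ H⁽²⁾`, is a bijection from the set of symmetric
structures on `H` onto the set of set-theoretic sections `s : A → H⁽²⁾` of the Baer
square projection satisfying `s(a)·s(b) = s(a·b)·ι({a,b})`. -/
theorem symmetric_structures_biject_with_baer_sections
    (hA : ∀ a b : H ⧸ C, a * b = b * a)
    (hcomm : ∀ h₁ h₂ : H, ⁅h₁, h₂⁆ ∈ C) :
    ∃ e : {σ : H ≃* H // IsSymmStruct C σ} ≃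
        {s : H ⧸ C → fiberProd C ⧸ antiDiag C hC // IsBaerSection C hC hcomm s},
      ∀ (σ : {σ : H ≃* H // IsSymmStruct C σ}) (h : H) (x : fiberProd C),
        (x : H × H).1 = (h * σ.1 h)⁻¹ * h → (x : H × H).2 = h →
          (e σ).1 (QuotientGroup.mk h) = QuotientGroup.mk x := by
  refine ⟨{ toFun := fun p => ⟨fwdS C hC p.1 p.2, fwdS_isSection C hC hcomm p.1 p.2⟩
            invFun := fun q => ⟨bwdEquiv C hC hcomm q.1 q.2, bwdEquiv_isSymm C hC hcomm q.1 q.2⟩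
            left_inv := ?_
            right_inv := ?_ }, ?_⟩
  · -- left inverse
    rintro ⟨σ, hσ⟩
    refine Subtype.ext (MulEquiv.ext fun h => ?_)
    show h * (prodOf C hC (fwdS C hC σ hσ (QuotientGroup.mk h)))⁻¹ = σ h
    have hv : prodOf C hC (fwdS C hC σ hσ (QuotientGroup.mk h)) =
        ((h * σ h)⁻¹ * h) * h := rfl
    rw [hv]; group
  · -- right inverse
    rintro ⟨s, hs⟩
    refine Subtype.ext (funext fun a => ?_)
    obtain ⟨h, rfl⟩ := QuotientGroup.mk_surjective a
    show fwdS C hC (bwdEquiv C hC hcomm s hs) (bwdEquiv_isSymm C hC hcomm s hs)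
        (QuotientGroup.mk h) = s (QuotientGroup.mk h)
    rw [fwdS_mk]
    obtain ⟨z, hz, hz1, hz2⟩ := aux_rep C hC hcomm s hs (QuotientGroup.mk h)
    have hcz : h⁻¹ * (z : H × H).2 ∈ C := QuotientGroup.eq.mp hz2.symm
    have hσ'h : bwdEquiv C hC hcomm s hs h =
        h * (prodOf C hC (s (QuotientGroup.mk h)))⁻¹ := rfl
    have hQ : prodOf C hC (s (QuotientGroup.mk h)) = (z : H × H).1 * (z : H × H).2 := by
      rw [← hz]; rfl
    refine (aux_baer_eq C hC _ z ?_ ?_).trans hz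
    · show ((h * bwdEquiv C hC hcomm s hs h)⁻¹ * h)⁻¹ * (z : H × H).1 ∈ C
      rw [hσ'h, hQ]
      have hword : ((h * (h * ((z : H × H).1 * (z : H × H).2)⁻¹))⁻¹ * h)⁻¹ * (z : H × H).1 =
          h * (h⁻¹ * (z : H × H).2)⁻¹ * h⁻¹ := by group
      rw [hword]
      exact Subgroup.Normal.conj_mem inferInstance _ (C.inv_mem hcz) h
    · show h⁻¹ * (z : H × H).2 =
        (((h * bwdEquiv C hC hcomm s hs h)⁻¹ * h)⁻¹ * (z : H × H).1)⁻¹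
      rw [hσ'h, hQ]
      have key : (h⁻¹ * (z : H × H).2) * h⁻¹ = h⁻¹ * (h⁻¹ * (z : H × H).2) :=
        aux_cc C hC hcz h⁻¹
      calc h⁻¹ * (z : H × H).2 = h * (h⁻¹ * (h⁻¹ * (z : H × H).2)) := by group
        _ = h * ((h⁻¹ * (z : H × H).2) * h⁻¹) := by rw [← key]
        _ = (((h * (h * ((z : H × H).1 * (z : H × H).2)⁻¹))⁻¹ * h)⁻¹ * (z : H × H).1)⁻¹ := by
            group
  · -- defining property of the forward map
    rintro ⟨σ, hσ⟩ h x hx1 hx2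
    show fwdS C hC σ hσ (QuotientGroup.mk h) = QuotientGroup.mk x
    rw [fwdS_mk]
    exact congrArg QuotientGroup.mk (Subtype.ext (Prod.ext hx1.symm hx2.symm))

end BaerSquare
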